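/- arXiv:2406.00576 — 3 statements merged into one kernel-verified Lean document; each statement's English description precedes it below -/
import Mathlib

section
/- Let F, f : ℝ^d → ℝ be convex functions with F M-Lipschitz and f M-Lipschitz, and let δ > 0. Suppose F(x) ≤ f(x) + δ for all x, and f(x_t) ≤ F(x_t) + δ for finitely many points x_1,...,x_T. Define F'(x) = max{F(x), f(x) - δ}. Then F' is convex, M-Lipschitz, satisfies ‖F' - f‖_∞ ≤ δ, and for each t, F'(x_t) = F(x_t) and every subgradient of F at x_t is a subgradient of F' at x_t. -/
open Metric
open scoped RealInnerProductSpace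

theorem stmt0 {d T : ℕ} (M δ : ℝ) (hδ : 0 < δ)
    (F f : EuclideanSpace ℝ (Fin d) → ℝ)
    (hFconv : ConvexOn ℝ Set.univ F) (hfconv : ConvexOn ℝ Set.univ f)
    (hFlip : ∀ x y, |F x - F y| ≤ M * ‖x - y‖)
    (hflip : ∀ x y, |f x - f y| ≤ M * ‖x - y‖)
    (hunder : ∀ x, F x ≤ f x + δ)
    (x : Fin T → EuclideanSpace ℝ (Fin d))
    (hquery : ∀ t, f (x t) ≤ F (x t) + δ)
    (F' : EuclideanSpace ℝ (Fin d) → ℝ)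
    (hF' : ∀ y, F' y = max (F y) (f y - δ)) :
    ConvexOn ℝ Set.univ F' ∧ (∀ y z, |F' y - F' z| ≤ M * ‖y - z‖) ∧
    (∀ y, |F' y - f y| ≤ δ) ∧
    ∀ t : Fin T, F' (x t) = F (x t) ∧
      ∀ g : EuclideanSpace ℝ (Fin d),
        (∀ y, F (x t) + ⟪g, y - x t⟫ ≤ F y) →
        (∀ y, F' (x t) + ⟪g, y - x t⟫ ≤ F' y) := by
  have hF'eq : F' = fun y => max (F y) (f y - δ) := funext hF'
  refine ⟨?_, ?_, ?_, ?_⟩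
  · rw [hF'eq]
    exact hFconv.sup (hfconv.sub (concaveOn_const δ convex_univ))
  · intro y z
    rw [hF' y, hF' z]
    refine le_trans (abs_max_sub_max_le_max _ _ _ _) (max_le (hFlip y z) ?_)
    have := hflip y z
    calc |f y - δ - (f z - δ)| = |f y - f z| := by ring_nf
      _ ≤ M * ‖y - z‖ := this
  · intro y
    rw [hF' y, abs_le]
    constructor
    · have : f y - δ ≤ max (F y) (f y - δ) := le_max_right _ _
      linarith
    · have h1 : F y ≤ f y + δ := hunder y
      have h2 : f y - δ ≤ f y + δ := by linarith
      have := max_le h1 h2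
      linarith
  · intro t
    have hmax : F' (x t) = F (x t) := by
      rw [hF']
      exact max_eq_left (by linarith [hquery t])
    refine ⟨hmax, ?_⟩
    intro g hg y
    rw [hmax, hF' y]
    exact le_trans (hg y) (le_max_left _ _)
end

section
/- Let f : ℝ^d → ℝ be an α-smooth convex function (i.e., differentiable with ‖∇f(x)-∇f(y)‖ ≤ α‖x-y‖) and h : B(0,4R) → ℝ a convex function with ‖h - f‖_∞ ≤ ε on B(0,4R), where ε ≤ αR². Then for every x ∈ B(0,2R) and every subgradient g of h at x, ‖g - ∇f(x)‖ ≤ 2√(αε). -/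
open Metric
open scoped RealInnerProductSpace

lemma smooth_quad_upper {d : ℕ} (α : ℝ) (hα : 0 ≤ α)
    (f : EuclideanSpace ℝ (Fin d) → ℝ) (hfdiff : Differentiable ℝ f)
    (hsmooth : ∀ x y, ‖gradient f x - gradient f y‖ ≤ α * ‖x - y‖)
    (x y : EuclideanSpace ℝ (Fin d)) :
    f y ≤ f x + ⟪gradient f x, y - x⟫ + α / 2 * ‖y - x‖ ^ 2 := by
  set w := y - x with hw
  have hline : ∀ s : ℝ, HasDerivAt (fun s : ℝ => x + s • w) w s := by
    intro s
    have := ((hasDerivAt_id s).smul_const w).const_add x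
    simpa using this
  have hφ : ∀ s : ℝ, HasDerivAt (fun s : ℝ => f (x + s • w))
      ⟪gradient f (x + s • w), w⟫ s := by
    intro s
    have h1 := (hfdiff (x + s • w)).hasGradientAt.hasFDerivAt
    have := h1.comp_hasDerivAt s (hline s)
    simp [InnerProductSpace.toDual_apply_apply] at this ⊢
    exact this
  set ψ : ℝ → ℝ := fun s => f (x + s • w) - s * ⟪gradient f x, w⟫ - α / 2 * (s ^ 2 * ‖w‖ ^ 2)
    with hψdef
  have hψ : ∀ s : ℝ, HasDerivAt ψ
      (⟪gradient f (x + s • w), w⟫ - ⟪gradient f x, w⟫ - α / 2 * (2 * s * ‖w‖ ^ 2)) s := by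
    intro s
    have h2 : HasDerivAt (fun s : ℝ => s * ⟪gradient f x, w⟫) ⟪gradient f x, w⟫ s := by
      simpa using (hasDerivAt_id s).mul_const ⟪gradient f x, w⟫
    have h3 : HasDerivAt (fun s : ℝ => α / 2 * (s ^ 2 * ‖w‖ ^ 2)) (α / 2 * (2 * s * ‖w‖ ^ 2)) s := by
      have := ((hasDerivAt_pow 2 s).mul_const (‖w‖ ^ 2)).const_mul (α / 2)
      simpa [mul_comm, mul_assoc, mul_left_comm] using this
    exact ((hφ s).sub h2).sub h3
  have hanti : AntitoneOn ψ (Set.Icc (0 : ℝ) 1) := by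
    apply antitoneOn_of_deriv_nonpos (convex_Icc 0 1)
    · have hd : Differentiable ℝ ψ := fun s => (hψ s).differentiableAt
      exact hd.continuous.continuousOn
    · exact fun s _ => (hψ s).differentiableAt.differentiableWithinAt
    · intro s hs
      rw [interior_Icc] at hs
      rw [(hψ s).deriv]
      have hker : ⟪gradient f (x + s • w), w⟫ - ⟪gradient f x, w⟫
          = ⟪gradient f (x + s • w) - gradient f x, w⟫ := by
        rw [inner_sub_left]
      have hcs : ⟪gradient f (x + s • w) - gradient f x, w⟫
          ≤ ‖gradient f (x + s • w) - gradient f x‖ * ‖w‖ :=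
        real_inner_le_norm _ _
      have hlip : ‖gradient f (x + s • w) - gradient f x‖ ≤ α * (s * ‖w‖) := by
        have := hsmooth (x + s • w) x
        simpa [norm_smul, abs_of_nonneg hs.1.le] using this
      have : ⟪gradient f (x + s • w), w⟫ - ⟪gradient f x, w⟫ ≤ α * s * ‖w‖ ^ 2 := by
        rw [hker]
        calc ⟪gradient f (x + s • w) - gradient f x, w⟫
            ≤ ‖gradient f (x + s • w) - gradient f x‖ * ‖w‖ := hcs
          _ ≤ α * (s * ‖w‖) * ‖w‖ := by
              apply mul_le_mul_of_nonneg_right hlip (norm_nonneg _)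
          _ = α * s * ‖w‖ ^ 2 := by ring
      nlinarith [this]
  have h01 : ψ 1 ≤ ψ 0 := hanti (by norm_num) (by norm_num) (by norm_num)
  have e0 : ψ 0 = f x := by simp [hψdef]
  have e1 : ψ 1 = f y - ⟪gradient f x, w⟫ - α / 2 * ‖w‖ ^ 2 := by
    simp [hψdef, hw]
  rw [e0, e1] at h01
  linarith

theorem stmt4 {d : ℕ} (R ε α : ℝ) (hR : 0 < R) (hε : 0 ≤ ε) (hα : 0 ≤ α)
    (hεα : ε ≤ α * R ^ 2)
    (f h : EuclideanSpace ℝ (Fin d) → ℝ)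
    (hfconv : ConvexOn ℝ Set.univ f)
    (hfdiff : Differentiable ℝ f)
    (hsmooth : ∀ x y, ‖gradient f x - gradient f y‖ ≤ α * ‖x - y‖)
    (hhconv : ConvexOn ℝ (closedBall (0 : EuclideanSpace ℝ (Fin d)) (4 * R)) h)
    (hclose : ∀ x ∈ closedBall (0 : EuclideanSpace ℝ (Fin d)) (4 * R), |h x - f x| ≤ ε)
    (x : EuclideanSpace ℝ (Fin d)) (hx : x ∈ closedBall (0 : EuclideanSpace ℝ (Fin d)) (2 * R))
    (g : EuclideanSpace ℝ (Fin d))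
    (hg : ∀ y ∈ closedBall (0 : EuclideanSpace ℝ (Fin d)) (4 * R), h x + ⟪g, y - x⟫ ≤ h y) :
    ‖g - gradient f x‖ ≤ 2 * Real.sqrt (α * ε) := by
  set v := g - gradient f x with hv
  by_cases hv0 : v = 0
  · rw [hv0, norm_zero]
    positivity
  have hvn : 0 < ‖v‖ := norm_pos_iff.mpr hv0
  set u : EuclideanSpace ℝ (Fin d) := ‖v‖⁻¹ • v with hu
  have hun : ‖u‖ = 1 := by
    rw [hu, norm_smul, norm_inv, norm_norm, inv_mul_cancel₀ hvn.ne']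
  have hxn : ‖x‖ ≤ 2 * R := by simpa [mem_closedBall, dist_eq_norm] using hx
  have hx4 : x ∈ closedBall (0 : EuclideanSpace ℝ (Fin d)) (4 * R) := by
    simp only [mem_closedBall, dist_eq_norm, sub_zero]
    linarith
  -- key inequality
  have key : ∀ t : ℝ, 0 < t → t ≤ 2 * R → t * ‖v‖ ≤ α / 2 * t ^ 2 + 2 * ε := by
    intro t ht ht2
    set y := x + t • u with hy
    have hyx : y - x = t • u := by rw [hy]; abel
    have hyn : ‖y - x‖ = t := by
      rw [hyx, norm_smul, hun, mul_one, Real.norm_eq_abs, abs_of_pos ht]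
    have hy4 : y ∈ closedBall (0 : EuclideanSpace ℝ (Fin d)) (4 * R) := by
      simp only [mem_closedBall, dist_eq_norm, sub_zero]
      calc ‖y‖ = ‖x + (y - x)‖ := by rw [add_sub_cancel]
        _ ≤ ‖x‖ + ‖y - x‖ := norm_add_le _ _
        _ ≤ 2 * R + t := by rw [hyn]; linarith
        _ ≤ 4 * R := by linarith
    have hsub := hg y hy4
    have hcx := hclose x hx4
    have hcy := hclose y hy4
    have hfquad := smooth_quad_upper α hα f hfdiff hsmooth x y
    have hinner : ⟪v, y - x⟫ = t * ‖v‖ := by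
      rw [hyx, hu, real_inner_smul_right, real_inner_smul_right,
        real_inner_self_eq_norm_sq]
      field_simp
    have hgsplit : ⟪g, y - x⟫ = ⟪v, y - x⟫ + ⟪gradient f x, y - x⟫ := by
      rw [hv, inner_sub_left]; ring
    rw [abs_le] at hcx hcy
    rw [hyn] at hfquad
    rw [hgsplit, hinner] at hsub
    linarith
  -- case analysis
  rcases eq_or_lt_of_le hα with hα0 | hαpos
  · -- α = 0, so ε = 0 and α/2 t² term vanishes
    have hε0 : ε ≤ 0 := by nlinarith
    have := key (2 * R) (by linarith) le_rfl
    have hvle : ‖v‖ ≤ 0 := by nlinarith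
    calc ‖v‖ ≤ 0 := hvle
      _ ≤ 2 * Real.sqrt (α * ε) := by positivity
  rcases eq_or_lt_of_le hε with hε0 | hεpos
  · -- ε = 0
    by_contra hcon
    push_neg at hcon
    rw [← hε0, mul_zero, Real.sqrt_zero, mul_zero] at hcon
    set t := min (2 * R) (‖v‖ / α) with htdef
    have ht : 0 < t := lt_min (by linarith) (div_pos hcon hαpos)
    have ht2 : t ≤ 2 * R := min_le_left _ _
    have hkey := key t ht ht2
    have htα : t ≤ ‖v‖ / α := min_le_right _ _
    have : α * t ≤ ‖v‖ := by
      have := (le_div_iff₀ hαpos).mp htα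
      nlinarith
    nlinarith [hkey, this, ht]
  · -- α > 0, ε > 0
    set t := 2 * Real.sqrt (ε / α) with htdef
    have hsq : Real.sqrt (ε / α) ^ 2 = ε / α :=
      Real.sq_sqrt (div_nonneg hεpos.le hαpos.le)
    have hsqpos : 0 < Real.sqrt (ε / α) := Real.sqrt_pos.mpr (div_pos hεpos hαpos)
    have ht : 0 < t := by positivity
    have ht2 : t ≤ 2 * R := by
      have : Real.sqrt (ε / α) ≤ R := by
        rw [show R = Real.sqrt (R ^ 2) from (Real.sqrt_sq hR.le).symm]
        apply Real.sqrt_le_sqrt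
        rw [div_le_iff₀ hαpos]
        nlinarith
      linarith
    have hkey := key t ht ht2
    -- t * ‖v‖ ≤ α/2 * t² + 2ε = 4ε, and t * (2√(αε)) = 4ε
    have ht4 : α / 2 * t ^ 2 + 2 * ε = 4 * ε := by
      rw [htdef]
      have : (2 * Real.sqrt (ε / α)) ^ 2 = 4 * (ε / α) := by
        rw [mul_pow, hsq]; ring
      rw [this]
      field_simp
      ring
    have htprod : t * (2 * Real.sqrt (α * ε)) = 4 * ε := by
      rw [htdef]
      have h1 : Real.sqrt (ε / α) * Real.sqrt (α * ε) = ε := by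
        rw [← Real.sqrt_mul (div_nonneg hεpos.le hαpos.le)]
        rw [show ε / α * (α * ε) = ε ^ 2 by field_simp]
        exact Real.sqrt_sq hεpos.le
      calc 2 * Real.sqrt (ε / α) * (2 * Real.sqrt (α * ε))
          = 4 * (Real.sqrt (ε / α) * Real.sqrt (α * ε)) := by ring
        _ = 4 * ε := by rw [h1]
    rw [ht4] at hkey
    rw [← htprod] at hkey
    exact le_of_mul_le_mul_left hkey ht
end

section
/- Let C ⊆ B(0,R) ⊆ ℝ^d be a convex set, η > 0, and define C_{-η} = {x ∈ C : B(x,η) ⊆ C}. Let x_t ∉ C, let g be a unit vector with ⟨g, x⟩ ≤ ⟨g, x_t⟩ for all x ∈ C (an exact separating direction), and let ĝ be a unit vector with ‖ĝ - g‖ ≤ η/(2R). Then the halfspace H(ĝ, x_t) = {x : ⟨ĝ, x⟩ ≤ ⟨ĝ, x_t⟩} contains C_{-η}. -/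
open Metric
open scoped RealInnerProductSpace

theorem stmt10 {d : ℕ} (R η : ℝ) (hR : 0 < R) (hη : 0 < η)
    (C : Set (EuclideanSpace ℝ (Fin d))) (hC : Convex ℝ C)
    (hCR : C ⊆ closedBall (0 : EuclideanSpace ℝ (Fin d)) R)
    (xt : EuclideanSpace ℝ (Fin d)) (hxt : xt ∈ closedBall (0 : EuclideanSpace ℝ (Fin d)) R)
    (hxtC : xt ∉ C)
    (g gh : EuclideanSpace ℝ (Fin d)) (hg1 : ‖g‖ = 1)
    (hsep : ∀ x ∈ C, ⟪g, x⟫ ≤ ⟪g, xt⟫)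
    (hgh1 : ‖gh‖ = 1) (hclose : ‖gh - g‖ ≤ η / (2 * R)) :
    ∀ y ∈ {x ∈ C | closedBall x η ⊆ C}, ⟪gh, y⟫ ≤ ⟪gh, xt⟫ := by
  rintro y ⟨hyC, hball⟩
  have hyg : y + η • g ∈ C := by
    apply hball
    simp [mem_closedBall, dist_eq_norm, norm_smul, hg1, abs_of_pos hη, hη.le]
  have h1 : ⟪g, y⟫ + η ≤ ⟪g, xt⟫ := by
    have := hsep _ hyg
    rw [inner_add_right, real_inner_smul_right, real_inner_self_eq_norm_sq, hg1] at this
    linarith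
  have hyR : ‖y‖ ≤ R := by simpa [mem_closedBall, dist_eq_norm] using hCR hyC
  have hxtR : ‖xt‖ ≤ R := by simpa [mem_closedBall, dist_eq_norm] using hxt
  have h2 : |⟪gh - g, y - xt⟫| ≤ η := by
    calc |⟪gh - g, y - xt⟫| ≤ ‖gh - g‖ * ‖y - xt‖ := abs_real_inner_le_norm _ _
    _ ≤ (η / (2 * R)) * (2 * R) := by
        apply mul_le_mul hclose _ (norm_nonneg _) (by positivity)
        calc ‖y - xt‖ ≤ ‖y‖ + ‖xt‖ := norm_sub_le _ _
        _ ≤ 2 * R := by linarith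
    _ = η := by field_simp
  have h3 : ⟪gh, y⟫ - ⟪gh, xt⟫ = (⟪g, y⟫ - ⟪g, xt⟫) + ⟪gh - g, y - xt⟫ := by
    simp [inner_sub_left, inner_sub_right]; ring
  have := abs_le.mp h2
  linarith
end
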